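/- Let G be a finite p-group with G' powerful, and let C = C_G(G'/(G')^p) be the subgroup of elements of G acting trivially on G'/(G')^p by conjugation. Then for all i, j ≥ 0, [(G')^{p^i}, C^{p^j}] ≤ (G')^{p^{i+j+1}}. -/

import Mathlib

/-- The subgroup generated by `n`-th powers of elements of `H`. -/
def subPow {G : Type*} [Group G] (H : Subgroup G) (n : ℕ) : Subgroup G :=
  Subgroup.closure ((· ^ n) '' (H : Set G))

open scoped commutatorElement

namespace PowfulAux

open Subgroup

variable {G : Type*} [Group G]

theorem pow_mem_subPow {H : Subgroup G} {a : G} (ha : a ∈ H) (n : ℕ) :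
    a ^ n ∈ subPow H n :=
  Subgroup.subset_closure ⟨a, ha, rfl⟩

theorem subPow_le {H K : Subgroup G} {n : ℕ} (h : ∀ a ∈ H, a ^ n ∈ K) :
    subPow H n ≤ K := by
  refine (Subgroup.closure_le K).mpr ?_
  rintro _ ⟨a, ha, rfl⟩
  exact h a ha

theorem subPow_mono {H K : Subgroup G} (h : H ≤ K) (n : ℕ) :
    subPow H n ≤ subPow K n :=
  subPow_le fun a ha => pow_mem_subPow (h ha) n

theorem subPow_le_self (H : Subgroup G) (n : ℕ) : subPow H n ≤ H :=
  subPow_le fun _ ha => pow_mem ha n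

theorem subPow_normal {H : Subgroup G} (hH : H.Normal) (n : ℕ) :
    (subPow H n).Normal := by
  constructor
  intro x hx g
  induction hx using closure_induction with
  | mem y hy =>
    obtain ⟨a, ha, rfl⟩ := hy
    have : g * a ^ n * g⁻¹ = (g * a * g⁻¹) ^ n := by
      rw [conj_pow]
    rw [this]
    exact pow_mem_subPow (hH.conj_mem a ha g) n
  | one => simpa using one_mem _
  | mul y z hy hz hy' hz' =>
    have : g * (y * z) * g⁻¹ = (g * y * g⁻¹) * (g * z * g⁻¹) := by group
    rw [this]; exact mul_mem hy' hz'
  | inv y hy hy' =>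
    have : g * y⁻¹ * g⁻¹ = (g * y * g⁻¹)⁻¹ := by group
    rw [this]; exact inv_mem hy'

theorem map_subPow {G' : Type*} [Group G'] (f : G →* G') (H : Subgroup G) (n : ℕ) :
    Subgroup.map f (subPow H n) = subPow (Subgroup.map f H) n := by
  unfold subPow
  rw [MonoidHom.map_closure]
  congr 1
  ext y
  constructor
  · rintro ⟨_, ⟨a, ha, rfl⟩, rfl⟩
    exact ⟨f a, ⟨a, ha, rfl⟩, (map_pow f a n).symm⟩
  · rintro ⟨_, ⟨a, ha, rfl⟩, rfl⟩
    exact ⟨a ^ n, ⟨a, ha, rfl⟩, map_pow f a n⟩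

end PowfulAux

namespace PowfulAux
open Subgroup

variable {p : ℕ} [Fact p.Prime]

/-- In a finite `p`-group, a normal subgroup contained in `K^p ⊔ [K, G]` is trivial. -/
theorem descent {G : Type*} [Group G] [Finite G] (hG : IsPGroup p G)
    {K : Subgroup G} (hK : K.Normal)
    (h : K ≤ subPow K p ⊔ ⁅K, (⊤ : Subgroup G)⁆) : K = ⊥ := by
  haveI := hK
  set L : Subgroup G := ⁅K, (⊤ : Subgroup G)⁆ with hL
  haveI : L.Normal := Subgroup.commutator_normal K ⊤
  -- Step 1 : K ≤ L
  have hKL : K ≤ L := by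
    set q := QuotientGroup.mk' L with hq
    have hqsurj : Function.Surjective q := QuotientGroup.mk'_surjective L
    set Kb := Subgroup.map q K with hKb
    -- elements of Kb commute
    have hcomm : ∀ a ∈ Kb, ∀ b ∈ Kb, Commute a b := by
      rintro _ ⟨x, hx, rfl⟩ _ ⟨y, hy, rfl⟩
      have h1 : ⁅x, y⁆ ∈ L := Subgroup.commutator_mem_commutator hx (Subgroup.mem_top y)
      have h2 : q ⁅x, y⁆ = 1 := by
        rwa [← MonoidHom.mem_ker, QuotientGroup.ker_mk']
      have h3 : ⁅q x, q y⁆ = 1 := by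
        simpa [commutatorElement_def] using h2
      exact commutatorElement_eq_one_iff_commute.mp h3
    have hKbp : Kb ≤ subPow Kb p := by
      calc Kb ≤ Subgroup.map q (subPow K p ⊔ L) := Subgroup.map_mono h
        _ = Subgroup.map q (subPow K p) ⊔ Subgroup.map q L := by rw [Subgroup.map_sup]
        _ = subPow Kb p ⊔ ⊥ := by
            have hL0 : Subgroup.map q L = ⊥ :=
              (Subgroup.map_eq_bot_iff _).mpr (by rw [QuotientGroup.ker_mk'])
            rw [hL0, map_subPow]
        _ = subPow Kb p := by rw [sup_bot_eq]
    -- p-th powers form the whole of Kb at every level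
    have hroot : ∀ x ∈ subPow Kb p, ∃ y ∈ Kb, y ^ p = x := by
      intro x hx
      induction hx using closure_induction with
      | mem z hz => obtain ⟨a, ha, rfl⟩ := hz; exact ⟨a, ha, rfl⟩
      | one => exact ⟨1, one_mem _, one_pow p⟩
      | mul z w hz hw hz' hw' =>
        obtain ⟨a, ha, rfl⟩ := hz'
        obtain ⟨b, hb, rfl⟩ := hw'
        exact ⟨a * b, mul_mem ha hb, (hcomm a ha b hb).mul_pow p⟩
      | inv z hz hz' =>
        obtain ⟨a, ha, rfl⟩ := hz'
        exact ⟨a⁻¹, inv_mem ha, by rw [inv_pow]⟩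
    have hiter : ∀ (n : ℕ), ∀ x ∈ Kb, ∃ y ∈ Kb, y ^ p ^ n = x := by
      intro n
      induction n with
      | zero => exact fun x hx => ⟨x, hx, by rw [pow_zero, pow_one]⟩
      | succ n ih =>
        intro x hx
        obtain ⟨y, hy, rfl⟩ := hroot x (hKbp hx)
        obtain ⟨z, hz, rfl⟩ := ih y hy
        exact ⟨z, hz, by rw [← pow_mul, pow_succ]⟩
    have hmapbot : Kb = ⊥ := by
      obtain ⟨m, hm⟩ := IsPGroup.iff_card.mp (hG.to_quotient L)
      rw [eq_bot_iff]
      intro x hx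
      obtain ⟨y, _, rfl⟩ := hiter m x hx
      rw [Subgroup.mem_bot, ← hm]
      exact pow_card_eq_one'
    have := (Subgroup.map_eq_bot_iff _).mp hmapbot
    rwa [QuotientGroup.ker_mk'] at this
  -- Step 2 : nilpotency
  have hlcs : ∀ n, K ≤ (⊤ : Subgroup G).lowerCentralSeries n := by
    intro n
    induction n with
    | zero => exact le_top
    | succ n ih =>
      calc K ≤ ⁅K, (⊤ : Subgroup G)⁆ := hKL
        _ ≤ ⁅(⊤ : Subgroup G).lowerCentralSeries n, (⊤ : Subgroup G)⁆ := Subgroup.commutator_mono ih le_rfl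
        _ = (⊤ : Subgroup G).lowerCentralSeries (n + 1) := rfl
  obtain ⟨n, hn⟩ := _root_.nilpotent_iff_lowerCentralSeries.mp hG.isNilpotent
  exact le_bot_iff.mp (hn ▸ hlcs n)

/-- Absorption: to prove `X ≤ T` one may discard `X^p` and `[X, G]`. -/
theorem absorption {G : Type*} [Group G] [Finite G] (hG : IsPGroup p G)
    {X T : Subgroup G} (hX : X.Normal) (hT : T.Normal)
    (h : X ≤ T ⊔ (subPow X p ⊔ ⁅X, (⊤ : Subgroup G)⁆)) : X ≤ T := by
  haveI := hT; haveI := hX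
  set q := QuotientGroup.mk' T with hq
  have hqsurj : Function.Surjective q := QuotientGroup.mk'_surjective T
  have hXq : (Subgroup.map q X).Normal := hX.map q hqsurj
  have hle : Subgroup.map q X ≤ subPow (Subgroup.map q X) p ⊔ ⁅Subgroup.map q X, (⊤ : Subgroup (G ⧸ T))⁆ := by
    calc Subgroup.map q X ≤ Subgroup.map q (T ⊔ (subPow X p ⊔ ⁅X, (⊤ : Subgroup G)⁆)) :=
          Subgroup.map_mono h
      _ = Subgroup.map q T ⊔ (Subgroup.map q (subPow X p) ⊔ Subgroup.map q ⁅X, (⊤ : Subgroup G)⁆) := by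
          rw [Subgroup.map_sup, Subgroup.map_sup]
      _ ≤ subPow (Subgroup.map q X) p ⊔ ⁅Subgroup.map q X, (⊤ : Subgroup (G ⧸ T))⁆ := by
          have hT0 : Subgroup.map q T = ⊥ :=
            (Subgroup.map_eq_bot_iff _).mpr (by rw [QuotientGroup.ker_mk'])
          rw [hT0, bot_sup_eq, map_subPow, Subgroup.map_commutator]
          exact sup_le_sup le_rfl (Subgroup.commutator_mono le_rfl le_top)
  have hbot : Subgroup.map q X = ⊥ := descent (hG.to_quotient T) hXq hle
  have := (Subgroup.map_eq_bot_iff _).mp hbot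
  rwa [QuotientGroup.ker_mk'] at this

end PowfulAux

namespace PowfulAux
open Subgroup

variable {G : Type*} [Group G]

theorem comm_mul_left (a b c : G) : ⁅a * b, c⁆ = a * ⁅b, c⁆ * a⁻¹ * ⁅a, c⁆ := by
  simp only [commutatorElement_def]; group

theorem comm_inv_left (a c : G) : ⁅a⁻¹, c⁆ = a⁻¹ * ⁅a, c⁆⁻¹ * a := by
  simp only [commutatorElement_def]; group

theorem comm_mul_right (a b c : G) : ⁅a, b * c⁆ = ⁅a, b⁆ * (b * ⁅a, c⁆ * b⁻¹) := by
  simp only [commutatorElement_def]; group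

theorem comm_inv_right (a b : G) : ⁅a, b⁻¹⁆ = b⁻¹ * ⁅a, b⁆⁻¹ * b := by
  simp only [commutatorElement_def]; group

/-- Closure–reduction in the left slot of an elementwise commutator condition. -/
theorem comm_left_closure {M : Subgroup G} (hM : M.Normal) {S : Set G} {b : G}
    (h : ∀ s ∈ S, ⁅s, b⁆ ∈ M) : ∀ a ∈ Subgroup.closure S, ⁅a, b⁆ ∈ M := by
  intro a ha
  induction ha using closure_induction with
  | mem s hs => exact h s hs
  | one => simpa using one_mem M
  | mul x y hx hy hx' hy' =>
    rw [comm_mul_left]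
    exact mul_mem (hM.conj_mem _ hy' x) hx'
  | inv x hx hx' =>
    rw [comm_inv_left]
    simpa using hM.conj_mem _ (inv_mem hx') x⁻¹

/-- Closure–reduction in the right slot. -/
theorem comm_right_closure {M : Subgroup G} (hM : M.Normal) {S : Set G} {a : G}
    (h : ∀ s ∈ S, ⁅a, s⁆ ∈ M) : ∀ b ∈ Subgroup.closure S, ⁅a, b⁆ ∈ M := by
  intro b hb
  induction hb using closure_induction with
  | mem s hs => exact h s hs
  | one => simpa using one_mem M
  | mul x y hx hy hx' hy' =>
    rw [comm_mul_right]
    exact mul_mem hx' (hM.conj_mem _ hy' x)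
  | inv x hx hx' =>
    rw [comm_inv_right]
    simpa using hM.conj_mem _ (inv_mem hx') x⁻¹

/-- The key expansion: `[A^p, B] ≤ [A,B]^p ⊔ [[A,B],A]`. -/
theorem star (A B : Subgroup G) (hA : A.Normal) (hB : B.Normal) (n : ℕ) :
    ⁅subPow A n, B⁆ ≤ subPow ⁅A, B⁆ n ⊔ ⁅⁅A, B⁆, A⁆ := by
  haveI := hA; haveI := hB
  set V : Subgroup G := ⁅A, B⁆ with hV
  haveI : V.Normal := Subgroup.commutator_normal A B
  set W : Subgroup G := ⁅V, A⁆ with hW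
  haveI hWn : W.Normal := Subgroup.commutator_normal V A
  haveI : (subPow V n).Normal := subPow_normal ‹V.Normal› n
  set M : Subgroup G := subPow V n ⊔ W with hM
  haveI hMn : M.Normal := Subgroup.sup_normal _ _
  rw [Subgroup.commutator_le]
  intro g hg b hb
  refine comm_left_closure hMn ?_ g hg
  rintro _ ⟨a, ha, rfl⟩
  -- compute ⁅a^n, b⁆
  have key : ∀ k : ℕ, ∃ w ∈ W, ⁅a ^ k, b⁆ = ⁅a, b⁆ ^ k * w := by
    intro k
    induction k with
    | zero => exact ⟨1, one_mem W, by simp⟩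
    | succ k ih =>
      obtain ⟨w, hw, hwk⟩ := ih
      set v : G := ⁅a, b⁆ with hv
      have hvV : v ∈ V := Subgroup.commutator_mem_commutator ha hb
      have e1 : ⁅a ^ (k + 1), b⁆ = a * ⁅a ^ k, b⁆ * a⁻¹ * v := by
        have : a ^ (k + 1) = a * a ^ k := by rw [pow_succ']
        rw [this, comm_mul_left]
      have e2 : a * v ^ k * a⁻¹ = v ^ k * ⁅(v⁻¹) ^ k, a⁆ := by
        simp only [commutatorElement_def]; group
      have hWmem : ⁅(v⁻¹) ^ k, a⁆ ∈ W :=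
        Subgroup.commutator_mem_commutator (pow_mem (inv_mem hvV) k) ha
      refine ⟨v⁻¹ * (⁅(v⁻¹) ^ k, a⁆ * (a * w * a⁻¹)) * v, ?_, ?_⟩
      · have hin : ⁅(v⁻¹) ^ k, a⁆ * (a * w * a⁻¹) ∈ W :=
          mul_mem hWmem (hWn.conj_mem w hw a)
        simpa [inv_inv] using hWn.conj_mem _ hin v⁻¹
      · rw [e1, hwk]
        have : a * (v ^ k * w) * a⁻¹ = (a * v ^ k * a⁻¹) * (a * w * a⁻¹) := by group
        rw [this, e2]
        group
  obtain ⟨w, hw, hkey⟩ := key n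
  rw [hkey]
  exact mul_mem (Subgroup.mem_sup_left (pow_mem_subPow (Subgroup.commutator_mem_commutator ha hb) n))
    (Subgroup.mem_sup_right hw)

end PowfulAux

namespace PowfulAux
open Subgroup

variable {K : Type*} [Group K]

/-- conjugation fixes central powers -/
theorem conj_central_pow {c : K} (hc : ∀ g : K, Commute c g) (x : K) (m : ℕ) :
    x * c ^ m * x⁻¹ = c ^ m := by
  have hcm : c ^ m * x = x * c ^ m := (Commute.pow_left (hc x) m).eq
  rw [← hcm, mul_inv_cancel_right]

theorem collect_pow_right (x n : K) (hw : ∀ g : K, Commute ⁅(⁅x, n⁆)⁻¹, x⁆ g) (m : ℕ) :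
    ⁅(⁅x, n⁆)⁻¹, x ^ m⁆ = ⁅(⁅x, n⁆)⁻¹, x⁆ ^ m := by
  induction m with
  | zero => simp
  | succ m ih =>
    rw [pow_succ' x m, comm_mul_right, ih, conj_central_pow hw, ← pow_succ']

theorem collect_inv_pow_left (x n : K) (hw : ∀ g : K, Commute ⁅(⁅x, n⁆)⁻¹, x⁆ g) (k : ℕ) :
    ⁅((⁅x, n⁆)⁻¹) ^ k, x⁆ = ⁅(⁅x, n⁆)⁻¹, x⁆ ^ k := by
  induction k with
  | zero => simp
  | succ k ih =>
    rw [pow_succ' _ k, comm_mul_left, ih]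
    set v : K := ⁅x, n⁆
    set w : K := ⁅v⁻¹, x⁆
    have h1 : v⁻¹ * w ^ k * (v⁻¹)⁻¹ = w ^ k := conj_central_pow hw v⁻¹ k
    rw [h1, pow_succ]

/-- The main collection identity:
`[x^k, n] = [x,n]^k * [[x,n]⁻¹, x]^(k choose 2)` when `[[x,n]⁻¹,x]` is central. -/
theorem collect (x n : K) (hw : ∀ g : K, Commute ⁅(⁅x, n⁆)⁻¹, x⁆ g) (k : ℕ) :
    ⁅x ^ k, n⁆ = ⁅x, n⁆ ^ k * ⁅(⁅x, n⁆)⁻¹, x⁆ ^ (k.choose 2) := by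
  set v : K := ⁅x, n⁆ with hv
  set w : K := ⁅v⁻¹, x⁆ with hww
  induction k with
  | zero => simp
  | succ k ih =>
    have e0 : x ^ (k + 1) = x * x ^ k := pow_succ' x k
    rw [e0, comm_mul_left, ih]
    have e2 : x * (v ^ k * w ^ (k.choose 2)) * x⁻¹
        = (x * v ^ k * x⁻¹) * w ^ (k.choose 2) := by
      have hc : x * w ^ (k.choose 2) * x⁻¹ = w ^ (k.choose 2) := conj_central_pow hw x _
      calc x * (v ^ k * w ^ (k.choose 2)) * x⁻¹
          = (x * v ^ k * x⁻¹) * (x * w ^ (k.choose 2) * x⁻¹) := by group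
        _ = (x * v ^ k * x⁻¹) * w ^ (k.choose 2) := by rw [hc]
    have e3 : x * v ^ k * x⁻¹ = v ^ k * ⁅(v⁻¹) ^ k, x⁆ := by
      simp only [commutatorElement_def]; group
    rw [e2, e3, collect_inv_pow_left x n hw k]
    have hch : (k + 1).choose 2 = k.choose 2 + k := by
      rw [Nat.choose_succ_succ, Nat.choose_one_right, Nat.add_comm]
    rw [hch]
    have hwv : Commute w v := hw v
    have : v ^ k * w ^ k * w ^ k.choose 2 * v = v ^ (k+1) * (w ^ k * w ^ k.choose 2) := by
      rw [pow_succ]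
      have := (Commute.pow_left hwv k).eq
      have := (Commute.pow_left hwv (k.choose 2)).eq
      calc v ^ k * w ^ k * w ^ k.choose 2 * v
          = v ^ k * (w ^ k * w ^ k.choose 2 * v) := by group
        _ = v ^ k * (v * (w ^ k * w ^ k.choose 2)) := by
            rw [mul_assoc (w ^ k), (Commute.pow_left hwv (k.choose 2)).eq,
              ← mul_assoc (w ^ k), (Commute.pow_left hwv k).eq]; group
        _ = v ^ k * v * (w ^ k * w ^ k.choose 2) := by group
    rw [this, ← pow_add, Nat.add_comm k (k.choose 2)]

end PowfulAux

namespace PowfulAux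
open Subgroup

universe u

/-- Propagation of powerful embedding: if `[N,H] ≤ N^p` (and `[N,N] ≤ N^{p²}` when `p = 2`),
then `[N^p, H] ≤ N^{p²}`. Stated with an auxiliary cardinality bound for strong induction. -/
theorem pe_step_aux {p : ℕ} [Fact p.Prime] :
    ∀ (c : ℕ) {G : Type u} [Group G] [Finite G], Nat.card G ≤ c →
    IsPGroup p G → ∀ (N H : Subgroup G), N.Normal → H.Normal → N ≤ H →
    ⁅N, H⁆ ≤ subPow N p → (p = 2 → ⁅N, N⁆ ≤ subPow (subPow N p) p) →
    ⁅subPow N p, H⁆ ≤ subPow (subPow N p) p := by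
  intro c
  induction c with
  | zero =>
    intro G _ _ hc
    have : 0 < Nat.card G := Nat.card_pos
    omega
  | succ c ih =>
    intro G _ _ hc hG N H hN hH hNH h1 h2
    haveI := hN; haveI := hH
    haveI hP1 : (subPow N p).Normal := subPow_normal hN p
    haveI hP2 : (subPow (subPow N p) p).Normal := subPow_normal hP1 p
    by_cases hbot : subPow (subPow N p) p = ⊥
    · -- direct case
      set X : Subgroup G := ⁅subPow N p, H⁆ with hX
      haveI hXn : X.Normal := Subgroup.commutator_normal _ _
      haveI : (subPow X p).Normal := subPow_normal hXn p
      haveI : (⁅X, (⊤ : Subgroup G)⁆).Normal := Subgroup.commutator_normal _ _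
      set M : Subgroup G := subPow X p ⊔ ⁅X, (⊤ : Subgroup G)⁆ with hM
      haveI hMn : M.Normal := Subgroup.sup_normal _ _
      have hVX : ⁅N, subPow N p⁆ ≤ X := by
        rw [Subgroup.commutator_comm]
        exact Subgroup.commutator_mono le_rfl hNH
      have claim2 : ⁅subPow N p, subPow N p⁆ ≤ M := by
        refine (star N (subPow N p) hN hP1 p).trans (sup_le ?_ ?_)
        · exact (subPow_mono hVX p).trans le_sup_left
        · exact (Subgroup.commutator_mono hVX le_top).trans le_sup_right
      have claimY : ⁅subPow N p, N⁆ ≤ M := by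
        by_cases hp2 : p = 2
        · have hNN : ⁅N, N⁆ = ⊥ := le_bot_iff.mp (hbot ▸ h2 hp2)
          have habel : N ≤ Subgroup.centralizer (N : Set G) :=
            Subgroup.commutator_eq_bot_iff_le_centralizer.mp hNN
          have : ⁅subPow N p, N⁆ = ⊥ :=
            Subgroup.commutator_eq_bot_iff_le_centralizer.mpr
              ((subPow_le_self N p).trans habel)
          rw [this]; exact bot_le
        · -- p odd : quotient by M and collect
          set q := QuotientGroup.mk' M with hq
          have hqker : MonoidHom.ker q = M := QuotientGroup.ker_mk' M
          have hcent : ∀ ξ ∈ X, ∀ g : G ⧸ M, Commute (q ξ) g := by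
            intro ξ hξ g
            obtain ⟨g₀, rfl⟩ := QuotientGroup.mk'_surjective M g
            have : ⁅ξ, g₀⁆ ∈ M :=
              le_sup_right (α := Subgroup G)
                (Subgroup.commutator_mem_commutator hξ (Subgroup.mem_top g₀))
            have h0 : q ⁅ξ, g₀⁆ = 1 := by rwa [← MonoidHom.mem_ker, hqker]
            rw [map_commutatorElement] at h0
            exact commutatorElement_eq_one_iff_commute.mp h0
          have hmain : ∀ u ∈ N, ∀ m ∈ N, ⁅(q u) ^ p, q m⁆ = 1 := by
            intro u hu m hm
            have hvNp : ⁅u, m⁆ ∈ subPow N p :=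
              h1 (Subgroup.commutator_mem_commutator hu (hNH hm))
            have hwX : ⁅(⁅u, m⁆)⁻¹, u⁆ ∈ X := by
              refine Subgroup.commutator_mono le_rfl hNH ?_
              exact Subgroup.commutator_mem_commutator (inv_mem hvNp) hu
            have hw : ∀ g : G ⧸ M, Commute ⁅(⁅q u, q m⁆)⁻¹, q u⁆ g := by
              intro g
              have heq : ⁅(⁅q u, q m⁆)⁻¹, q u⁆ = q ⁅(⁅u, m⁆)⁻¹, u⁆ := by
                simp only [map_commutatorElement, map_inv]
              rw [heq]
              exact hcent _ hwX g
            rw [collect (q u) (q m) hw p]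
            -- v-part
            have hv1 : ⁅q u, q m⁆ ^ p = 1 := by
              have hz : ⁅u, m⁆ ^ p = 1 := by
                have h' : ⁅u, m⁆ ^ p ∈ subPow (subPow N p) p := pow_mem_subPow hvNp p
                rwa [hbot, Subgroup.mem_bot] at h'
              calc ⁅q u, q m⁆ ^ p = q (⁅u, m⁆ ^ p) := by
                    simp only [map_commutatorElement, map_pow]
                _ = 1 := by rw [hz, map_one]
            -- w-part
            have hchoose : p.choose 2 = (p - 1) / 2 * p := by
              have hodd : p % 2 = 1 := by
                rcases Nat.Prime.eq_two_or_odd (Fact.out : p.Prime) with h | h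
                · exact absurd h hp2
                · exact h
              have h2dvd : 2 ∣ p - 1 := by omega
              obtain ⟨e, he⟩ := h2dvd
              rw [Nat.choose_two_right, he]
              have h1' : p * (2 * e) = 2 * (p * e) := by ring
              rw [h1', Nat.mul_div_cancel_left _ (by norm_num : 0 < 2),
                Nat.mul_div_cancel_left _ (by norm_num : 0 < 2)]
              ring
            have hw1 : ⁅(⁅q u, q m⁆)⁻¹, q u⁆ ^ p.choose 2 = 1 := by
              rw [← collect_pow_right (q u) (q m) hw (p.choose 2)]
              have hXP : ⁅(⁅u, m⁆)⁻¹, u ^ p.choose 2⁆ ∈ M := by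
                refine claim2 (Subgroup.commutator_mem_commutator (inv_mem hvNp) ?_)
                rw [hchoose, pow_mul]
                exact pow_mem_subPow (pow_mem hu _) p
              have hker1 : q ⁅(⁅u, m⁆)⁻¹, u ^ p.choose 2⁆ = 1 := by
                rwa [← MonoidHom.mem_ker, hqker]
              calc ⁅(⁅q u, q m⁆)⁻¹, (q u) ^ p.choose 2⁆
                  = q ⁅(⁅u, m⁆)⁻¹, u ^ p.choose 2⁆ := by
                    simp only [map_commutatorElement, map_inv, map_pow]
                _ = 1 := hker1
            rw [hv1, hw1, one_mul]
          -- conclude via the quotient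
          have hqbot : Subgroup.map q ⁅subPow N p, N⁆ = ⊥ := by
            rw [Subgroup.map_commutator, map_subPow,
              Subgroup.commutator_eq_bot_iff_le_centralizer]
            refine subPow_le ?_
            rintro _ ⟨u, hu, rfl⟩
            rw [Subgroup.mem_centralizer_iff]
            rintro _ ⟨m, hm, rfl⟩
            exact (commutatorElement_eq_one_iff_commute.mp (hmain u hu m hm)).symm.eq
          have := (Subgroup.map_eq_bot_iff _).mp hqbot
          rwa [hqker] at this
      -- now absorb
      have hXM : X ≤ M := by
        refine (star N H hN hH p).trans (sup_le ?_ ?_)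
        · have : subPow ⁅N, H⁆ p ≤ subPow (subPow N p) p := subPow_mono h1 p
          rw [hbot] at this
          exact this.trans bot_le
        · exact (Subgroup.commutator_mono h1 le_rfl).trans claimY
      have habs : X ≤ ⊥ := by
        have hbn : (⊥ : Subgroup G).Normal := ⟨by intro n hn g; rw [Subgroup.mem_bot] at *; rw [hn]; group⟩
        refine absorption hG hXn hbn ?_
        rw [bot_sup_eq]
        exact hXM
      rw [hbot]
      exact habs
    · -- reduction case : quotient by T = N^{p²}
      set T : Subgroup G := subPow (subPow N p) p with hT
      set q := QuotientGroup.mk' T with hq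
      have hqsurj : Function.Surjective q := QuotientGroup.mk'_surjective T
      have hqker : MonoidHom.ker q = T := QuotientGroup.ker_mk' T
      have hcardlt : Nat.card (G ⧸ T) ≤ c := by
        have he : Nat.card G = Nat.card (G ⧸ T) * Nat.card T :=
          Subgroup.card_eq_card_quotient_mul_card_subgroup T
        have h2' : 1 < Nat.card T := (Subgroup.one_lt_card_iff_ne_bot T).mpr hbot
        have hqpos : 0 < Nat.card (G ⧸ T) := Nat.card_pos
        nlinarith
      have hres := ih hcardlt (hG.to_quotient T) (Subgroup.map q N) (Subgroup.map q H)
        (hN.map q hqsurj) (hH.map q hqsurj) (Subgroup.map_mono hNH)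
        (by rw [← Subgroup.map_commutator, ← map_subPow]; exact Subgroup.map_mono h1)
        (by
          intro hp2
          rw [← Subgroup.map_commutator, ← map_subPow, ← map_subPow]
          exact Subgroup.map_mono (h2 hp2))
      rw [← map_subPow, ← map_subPow, ← Subgroup.map_commutator] at hres
      have hTbot : Subgroup.map q T = ⊥ :=
        (Subgroup.map_eq_bot_iff _).mpr (by rw [hqker])
      rw [hTbot, le_bot_iff, Subgroup.map_eq_bot_iff, hqker] at hres
      exact hres

end PowfulAux

namespace PowfulAux
open Subgroup

universe u

theorem pe_step {p : ℕ} [Fact p.Prime] {G : Type u} [Group G] [Finite G]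
    (hG : IsPGroup p G) (N H : Subgroup G) (hN : N.Normal) (hH : H.Normal) (hNH : N ≤ H)
    (h1 : ⁅N, H⁆ ≤ subPow N p) (h2 : p = 2 → ⁅N, N⁆ ≤ subPow (subPow N p) p) :
    ⁅subPow N p, H⁆ ≤ subPow (subPow N p) p :=
  pe_step_aux (Nat.card G) le_rfl hG N H hN hH hNH h1 h2

/-- The `p = 2` companion: `[N^2, N^2] ≤ N^{2³}`. -/
theorem pe_sq_aux {p : ℕ} [Fact p.Prime] (hp2 : p = 2) :
    ∀ (c : ℕ) {G : Type u} [Group G] [Finite G], Nat.card G ≤ c →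
    IsPGroup p G → ∀ (N H : Subgroup G), N.Normal → H.Normal → N ≤ H →
    ⁅N, H⁆ ≤ subPow N p → ⁅N, N⁆ ≤ subPow (subPow N p) p →
    ⁅subPow N p, subPow N p⁆ ≤ subPow (subPow (subPow N p) p) p := by
  subst hp2
  intro c
  induction c with
  | zero =>
    intro G _ _ hc
    have : 0 < Nat.card G := Nat.card_pos
    omega
  | succ c ih =>
    intro G _ _ hc hG N H hN hH hNH h1 h2
    haveI := hN; haveI := hH
    haveI hP1 : (subPow N 2).Normal := subPow_normal hN 2
    haveI hP2 : (subPow (subPow N 2) 2).Normal := subPow_normal hP1 2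
    haveI hP3 : (subPow (subPow (subPow N 2) 2) 2).Normal := subPow_normal hP2 2
    by_cases hbot : subPow (subPow (subPow N 2) 2) 2 = ⊥
    · -- direct case
      have pe : ⁅subPow N 2, H⁆ ≤ subPow (subPow N 2) 2 :=
        pe_step hG N H hN hH hNH h1 (fun _ => h2)
      have peN : ⁅subPow N 2, N⁆ ≤ subPow (subPow N 2) 2 :=
        (Subgroup.commutator_mono le_rfl hNH).trans pe
      set Z : Subgroup G := ⁅subPow N 2, subPow N 2⁆ with hZ
      haveI hZn : Z.Normal := Subgroup.commutator_normal _ _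
      haveI : (subPow Z 2).Normal := subPow_normal hZn 2
      haveI : (⁅Z, (⊤ : Subgroup G)⁆).Normal := Subgroup.commutator_normal _ _
      set M : Subgroup G := subPow Z 2 ⊔ ⁅Z, (⊤ : Subgroup G)⁆ with hM
      haveI hMn : M.Normal := Subgroup.sup_normal _ _
      have claimA : ⁅subPow (subPow N 2) 2, subPow N 2⁆ ≤ M := by
        refine (star (subPow N 2) (subPow N 2) hP1 hP1 2).trans (sup_le ?_ ?_)
        · exact le_sup_left
        · exact (Subgroup.commutator_mono le_rfl le_top).trans le_sup_right
      have claimB : ⁅subPow (subPow N 2) 2, N⁆ ≤ M := by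
        refine (star (subPow N 2) N hP1 hN 2).trans (sup_le ?_ ?_)
        · have : subPow ⁅subPow N 2, N⁆ 2 ≤ subPow (subPow (subPow N 2) 2) 2 :=
            subPow_mono peN 2
          rw [hbot] at this
          exact this.trans bot_le
        · exact (Subgroup.commutator_mono peN le_rfl).trans claimA
      have hgen : ∀ x ∈ N, ∀ y ∈ N, ⁅x ^ 2, y ^ 2⁆ ∈ M := by
        intro x hx y hy
        set a : G := x ^ 2 with ha
        set v : G := ⁅a, y⁆ with hv
        have hvmem : v ∈ subPow (subPow N 2) 2 :=
          peN (Subgroup.commutator_mem_commutator (pow_mem_subPow hx 2) hy)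
        have hv2 : v ^ 2 = 1 := by
          have : v ^ 2 ∈ subPow (subPow (subPow N 2) 2) 2 := pow_mem_subPow hvmem 2
          rwa [hbot, Subgroup.mem_bot] at this
        have hid : ⁅a, y ^ 2⁆ = v ^ 2 * ⁅v⁻¹, y⁆ := by
          have : y ^ 2 = y * y := by rw [pow_two]
          rw [this, comm_mul_right, ← hv]
          simp only [commutatorElement_def]
          group
        rw [hid, hv2, one_mul]
        exact claimB (Subgroup.commutator_mem_commutator (inv_mem hvmem) hy)
      have hZM : Z ≤ M := by
        rw [hZ, Subgroup.commutator_le]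
        intro g₁ hg₁ g₂ hg₂
        refine comm_left_closure hMn ?_ g₁ hg₁
        rintro _ ⟨x, hx, rfl⟩
        refine comm_right_closure hMn ?_ g₂ hg₂
        rintro _ ⟨y, hy, rfl⟩
        exact hgen x hx y hy
      have hbn : (⊥ : Subgroup G).Normal :=
        ⟨by intro n hn g; rw [Subgroup.mem_bot] at *; rw [hn]; group⟩
      have habs : Z ≤ ⊥ := by
        refine absorption hG hZn hbn ?_
        rw [bot_sup_eq]
        exact hZM
      rw [hbot]
      exact habs
    · -- reduction case
      set T : Subgroup G := subPow (subPow (subPow N 2) 2) 2 with hT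
      set q := QuotientGroup.mk' T with hq
      have hqsurj : Function.Surjective q := QuotientGroup.mk'_surjective T
      have hqker : MonoidHom.ker q = T := QuotientGroup.ker_mk' T
      have hcardlt : Nat.card (G ⧸ T) ≤ c := by
        have he : Nat.card G = Nat.card (G ⧸ T) * Nat.card T :=
          Subgroup.card_eq_card_quotient_mul_card_subgroup T
        have h2' : 1 < Nat.card T := (Subgroup.one_lt_card_iff_ne_bot T).mpr hbot
        have hqpos : 0 < Nat.card (G ⧸ T) := Nat.card_pos
        nlinarith
      have hres := ih hcardlt (hG.to_quotient T) (Subgroup.map q N) (Subgroup.map q H)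
        (hN.map q hqsurj) (hH.map q hqsurj) (Subgroup.map_mono hNH)
        (by rw [← Subgroup.map_commutator, ← map_subPow]; exact Subgroup.map_mono h1)
        (by
          rw [← Subgroup.map_commutator, ← map_subPow, ← map_subPow]
          exact Subgroup.map_mono h2)
      rw [← map_subPow, ← map_subPow, ← map_subPow, ← Subgroup.map_commutator] at hres
      have hTbot : Subgroup.map q T = ⊥ :=
        (Subgroup.map_eq_bot_iff _).mpr (by rw [hqker])
      rw [hTbot, le_bot_iff, Subgroup.map_eq_bot_iff, hqker] at hres
      exact hres

theorem pe_sq {p : ℕ} [Fact p.Prime] (hp2 : p = 2) {G : Type u} [Group G] [Finite G]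
    (hG : IsPGroup p G) (N H : Subgroup G) (hN : N.Normal) (hH : H.Normal) (hNH : N ≤ H)
    (h1 : ⁅N, H⁆ ≤ subPow N p) (h2 : ⁅N, N⁆ ≤ subPow (subPow N p) p) :
    ⁅subPow N p, subPow N p⁆ ≤ subPow (subPow (subPow N p) p) p :=
  pe_sq_aux hp2 (Nat.card G) le_rfl hG N H hN hH hNH h1 h2

end PowfulAux

namespace PowfulAux
open Subgroup

variable {G : Type*} [Group G]

/-- Iterated `p`-th power subgroup. -/
def iterPow (H : Subgroup G) (p : ℕ) : ℕ → Subgroup G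
  | 0 => H
  | k + 1 => subPow (iterPow H p k) p

theorem iterPow_normal {H : Subgroup G} (hH : H.Normal) (p : ℕ) :
    ∀ k, (iterPow H p k).Normal
  | 0 => hH
  | k + 1 => subPow_normal (iterPow_normal hH p k) p

theorem iterPow_le_base (H : Subgroup G) (p : ℕ) : ∀ k, iterPow H p k ≤ H
  | 0 => le_rfl
  | k + 1 => (subPow_le_self _ p).trans (iterPow_le_base H p k)

theorem iterPow_add_le (H : Subgroup G) (p k : ℕ) : ∀ d, iterPow H p (k + d) ≤ iterPow H p k
  | 0 => le_rfl
  | d + 1 => (subPow_le_self _ p).trans (iterPow_add_le H p k d)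

theorem iterPow_antitone (H : Subgroup G) (p : ℕ) {k l : ℕ} (h : k ≤ l) :
    iterPow H p l ≤ iterPow H p k := by
  obtain ⟨d, rfl⟩ := Nat.exists_eq_add_of_le h
  exact iterPow_add_le H p k d

theorem iterPow_mono {H K : Subgroup G} (h : H ≤ K) (p : ℕ) :
    ∀ k, iterPow H p k ≤ iterPow K p k
  | 0 => h
  | k + 1 => subPow_mono (iterPow_mono h p k) p

theorem subPow_pow_le_iterPow (H : Subgroup G) (p : ℕ) :
    ∀ k, subPow H (p ^ k) ≤ iterPow H p k
  | 0 => by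
    refine subPow_le fun a ha => ?_
    simpa [iterPow] using ha
  | k + 1 => by
    refine subPow_le fun a ha => ?_
    have h1 : a ^ p ^ k ∈ iterPow H p k := subPow_pow_le_iterPow H p k (pow_mem_subPow ha _)
    have h2 : a ^ p ^ (k + 1) = (a ^ p ^ k) ^ p := by rw [← pow_mul, pow_succ]
    rw [h2]
    exact pow_mem_subPow h1 p

theorem le_subPow_one (H : Subgroup G) : H ≤ subPow H 1 := fun a ha => by
  simpa using pow_mem_subPow ha 1

theorem subPow_one_eq (H : Subgroup G) : subPow H 1 = H :=
  le_antisymm (subPow_le_self H 1) (le_subPow_one H)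

theorem subPow_mul_le (H : Subgroup G) (n m : ℕ) :
    subPow H (n * m) ≤ subPow (subPow H n) m :=
  subPow_le fun a ha => by
    rw [pow_mul]
    exact pow_mem_subPow (pow_mem_subPow ha n) m

theorem subPow_mul_le_left (H : Subgroup G) (n m : ℕ) :
    subPow H (n * m) ≤ subPow H n :=
  subPow_le fun a ha => by
    rw [pow_mul]
    exact pow_mem (pow_mem_subPow ha n) m

/-- The `p`-th power of a product, modulo the commutator subgroup. -/
theorem mul_pow_mem (H : Subgroup G) {u v : G} (hu : u ∈ H) (hv : v ∈ H) (n : ℕ) :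
    (u * v) ^ n * (u ^ n * v ^ n)⁻¹ ∈ ⁅H, H⁆ := by
  set u' : H := ⟨u, hu⟩
  set v' : H := ⟨v, hv⟩
  have key : (u' * v') ^ n * (u' ^ n * v' ^ n)⁻¹ ∈ commutator H := by
    rw [← QuotientGroup.eq_one_iff]
    have : ((((u' * v') ^ n * (u' ^ n * v' ^ n)⁻¹ : H) : H ⧸ commutator H)) =
        Abelianization.of ((u' * v') ^ n * (u' ^ n * v' ^ n)⁻¹) := rfl
    rw [this]
    simp [map_mul, map_pow, map_inv, mul_pow]
    rfl
  have himg : ((u' * v') ^ n * (u' ^ n * v' ^ n)⁻¹ : H) ∈ commutator H → 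
      (u * v) ^ n * (u ^ n * v ^ n)⁻¹ ∈ ⁅H, H⁆ := by
    intro hmem
    have h2 : H.subtype ((u' * v') ^ n * (u' ^ n * v' ^ n)⁻¹) ∈
        Subgroup.map H.subtype (commutator H) := Subgroup.mem_map_of_mem _ hmem
    have h3 : Subgroup.map H.subtype (commutator H) = ⁅H, H⁆ := by
      rw [_root_.commutator_def, Subgroup.map_commutator, ← MonoidHom.range_eq_map,
        Subgroup.range_subtype]
    rw [h3] at h2
    simpa using h2
  exact himg key

end PowfulAux

/-- A subgroup `H` of a (finite) `p`-group is powerful if `H' ≤ H^p` for `p` odd,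
or `H' ≤ H^4` for `p = 2`. -/
def IsPowerfulSubgroup (p : ℕ) {G : Type*} [Group G] (H : Subgroup G) : Prop :=
  if p = 2 then ⁅H, H⁆ ≤ subPow H 4 else ⁅H, H⁆ ≤ subPow H p

open PowfulAux in
/-- If `G` is a finite `p`-group with `G'` powerful and
`C = C_G(G'/(G')^p)`, then `[(G')^(p^i), C^(p^j)] ≤ (G')^(p^(i+j+1))`. -/
theorem commutator_pow_derived_centralizer
    {p : ℕ} [Fact p.Prime] {G : Type*} [Group G] [Finite G]
    (hG : IsPGroup p G)
    (hpow : IsPowerfulSubgroup p (commutator G))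
    (C : Subgroup G)
    (hC : ∀ g : G, g ∈ C ↔ ∀ a ∈ commutator G, ⁅g, a⁆ ∈ subPow (commutator G) p)
    (i j : ℕ) :
    ⁅subPow (commutator G) (p ^ i), subPow C (p ^ j)⁆ ≤
      subPow (commutator G) (p ^ (i + j + 1)) := by
  classical
  set Q : Subgroup G := commutator G with hQdef
  haveI hQn : Q.Normal := by rw [hQdef]; infer_instance
  have hpow4 : (p = 2 → ⁅Q, Q⁆ ≤ subPow Q 4) ∧ (p ≠ 2 → ⁅Q, Q⁆ ≤ subPow Q p) := by
    unfold IsPowerfulSubgroup at hpow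
    by_cases h : p = 2
    · rw [if_pos h] at hpow; exact ⟨fun _ => hpow, fun hc => absurd h hc⟩
    · rw [if_neg h] at hpow; exact ⟨fun hc => absurd hc h, fun _ => hpow⟩
  have hQQ : ⁅Q, Q⁆ ≤ subPow Q p := by
    by_cases h : p = 2
    · subst h
      exact (hpow4.1 rfl).trans (by simpa using subPow_mul_le_left Q 2 2)
    · exact hpow4.2 h
  have hQ2 : p = 2 → ⁅Q, Q⁆ ≤ subPow (subPow Q p) p := by
    intro h; subst h
    exact (hpow4.1 rfl).trans (by simpa using subPow_mul_le Q 2 2)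
  have hQC : Q ≤ C := by
    intro x hx
    exact (hC x).mpr fun a ha => hQQ (Subgroup.commutator_mem_commutator hx ha)
  haveI hPp : (subPow Q p).Normal := subPow_normal hQn p
  have hCn : C.Normal := by
    constructor
    intro g hg k
    refine (hC _).mpr fun a ha => ?_
    have h1 : k⁻¹ * a * k ∈ Q := by
      have := hQn.conj_mem a ha k⁻¹
      simpa using this
    have h2 : ⁅g, k⁻¹ * a * k⁆ ∈ subPow Q p := (hC g).mp hg _ h1
    have h3 : ⁅k * g * k⁻¹, a⁆ = k * ⁅g, k⁻¹ * a * k⁆ * k⁻¹ := by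
      simp only [commutatorElement_def]; group
    rw [h3]
    exact hPp.conj_mem _ h2 k
  have hQCc : ⁅Q, C⁆ ≤ subPow Q p := by
    rw [Subgroup.commutator_le]
    intro g1 hg1 g2 hg2
    have h := (hC g2).mp hg2 g1 hg1
    rw [← commutatorElement_inv]
    exact inv_mem h
  have pe_all : ∀ k, ⁅iterPow Q p k, C⁆ ≤ iterPow Q p (k + 1) ∧
      (p = 2 → ⁅iterPow Q p k, iterPow Q p k⁆ ≤ iterPow Q p (k + 2)) := by
    intro k
    induction k with
    | zero => exact ⟨hQCc, hQ2⟩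
    | succ k ih =>
      have hNk : (iterPow Q p k).Normal := iterPow_normal hQn p k
      have hNkC : iterPow Q p k ≤ C := (iterPow_le_base Q p k).trans hQC
      exact ⟨pe_step hG (iterPow Q p k) C hNk hCn hNkC ih.1 ih.2,
        fun hp2 => pe_sq hp2 hG (iterPow Q p k) C hNk hCn hNkC ih.1 (ih.2 hp2)⟩
  have F : ∀ b a, ⁅iterPow Q p a, iterPow C p b⁆ ≤ iterPow Q p (a + b + 1) := by
    intro b
    induction b with
    | zero => exact fun a => (pe_all a).1
    | succ b ihb =>
      intro a
      have hDb : (iterPow C p b).Normal := iterPow_normal hCn p b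
      have hNa : (iterPow Q p a).Normal := iterPow_normal hQn p a
      have h' : ⁅iterPow C p b, iterPow Q p a⁆ ≤ iterPow Q p (a + b + 1) := by
        rw [Subgroup.commutator_comm]; exact ihb a
      rw [Subgroup.commutator_comm]
      refine (star (iterPow C p b) (iterPow Q p a) hDb hNa p).trans (sup_le ?_ ?_)
      · exact subPow_mono h' p
      · refine (Subgroup.commutator_mono h' le_rfl).trans ?_
        exact (ihb (a + b + 1)).trans (iterPow_antitone Q p (by omega))
  have collapse : ∀ k, iterPow Q p k = subPow Q (p ^ k) := by
    intro k
    induction k with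
    | zero =>
      show Q = subPow Q (p ^ 0)
      rw [pow_zero, subPow_one_eq]
    | succ k ihk =>
      have e1 : iterPow Q p (k + 1) = subPow (subPow Q (p ^ k)) p := by
        show subPow (iterPow Q p k) p = _
        rw [ihk]
      refine le_antisymm ?_ (subPow_pow_le_iterPow Q p (k + 1))
      rw [e1]
      set X : Subgroup G := subPow (subPow Q (p ^ k)) p with hX
      haveI hNk : (subPow Q (p ^ k)).Normal := subPow_normal hQn _
      haveI hXn : X.Normal := subPow_normal hNk p
      haveI hTn : (subPow Q (p ^ (k + 1))).Normal := subPow_normal hQn _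
      have hsplit : X ≤ subPow Q (p ^ (k + 1)) ⊔ ⁅subPow Q (p ^ k), subPow Q (p ^ k)⁆ := by
        refine subPow_le ?_
        intro u hu
        induction hu using Subgroup.closure_induction with
        | mem y hy =>
          obtain ⟨a, ha, rfl⟩ := hy
          have e : (a ^ p ^ k) ^ p = a ^ p ^ (k + 1) := by rw [← pow_mul, ← pow_succ]
          rw [e]
          exact Subgroup.mem_sup_left (pow_mem_subPow ha _)
        | one => rw [one_pow]; exact one_mem _
        | mul x y hx hy hx' hy' =>
          have hd := mul_pow_mem (subPow Q (p ^ k)) hx hy p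
          have e : (x * y) ^ p = ((x * y) ^ p * (x ^ p * y ^ p)⁻¹) * (x ^ p * y ^ p) := by
            group
          rw [e]
          exact mul_mem (Subgroup.mem_sup_right hd) (mul_mem hx' hy')
        | inv x hx hx' =>
          rw [inv_pow]
          exact inv_mem hx'
      rcases Nat.eq_zero_or_pos k with hk0 | hkpos
      · subst hk0
        have e0 : subPow Q (p ^ 0) = Q := by rw [pow_zero, subPow_one_eq]
        by_cases hp2 : p = 2
        · subst hp2
          have hc2 : ⁅subPow Q (2 ^ 0), subPow Q (2 ^ 0)⁆ ≤ subPow X 2 := by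
            rw [e0]
            refine (hpow4.1 rfl).trans ?_
            have h4 : subPow Q 4 ≤ subPow (subPow Q 2) 2 := by simpa using subPow_mul_le Q 2 2
            refine h4.trans ?_
            have : subPow Q 2 = X := by rw [hX, e0]
            rw [this]
          refine absorption hG hXn hTn ?_
          refine hsplit.trans (sup_le le_sup_left ?_)
          exact hc2.trans (le_sup_of_le_right le_sup_left)
        · have hc1 : ⁅subPow Q (p ^ 0), subPow Q (p ^ 0)⁆ ≤ subPow Q (p ^ (0 + 1)) := by
            rw [e0, pow_one]
            exact hpow4.2 hp2
          exact hsplit.trans (sup_le le_rfl hc1)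
      · have hcomm_bd : ⁅subPow Q (p ^ k), subPow Q (p ^ k)⁆ ≤ iterPow Q p (2 * k + 1) := by
          rw [← ihk]
          refine (Subgroup.commutator_mono le_rfl (iterPow_mono hQC p k)).trans ?_
          exact (F k k).trans (iterPow_antitone Q p (by omega))
        have h2k : iterPow Q p (2 * k + 1) ≤ subPow X p := by
          refine (iterPow_antitone Q p (by omega : k + 2 ≤ 2 * k + 1)).trans ?_
          show subPow (iterPow Q p (k + 1)) p ≤ subPow X p
          rw [e1]
        refine absorption hG hXn hTn ?_
        refine hsplit.trans (sup_le le_sup_left ?_)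
        exact (hcomm_bd.trans h2k).trans (le_sup_of_le_right le_sup_left)
  calc ⁅subPow Q (p ^ i), subPow C (p ^ j)⁆
      ≤ ⁅iterPow Q p i, iterPow C p j⁆ :=
        Subgroup.commutator_mono (le_of_eq (collapse i).symm) (subPow_pow_le_iterPow C p j)
    _ ≤ iterPow Q p (i + j + 1) := F j i
    _ = subPow Q (p ^ (i + j + 1)) := collapse (i + j + 1)
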